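/- Let Φ ∈ ℝ^{m×n}, let T ⊆ {1,…,n} with #T = s, and let k ≥ 1. Assume Φ satisfies the RIP of order s+2k with radius δ_{s+2k} ∈ (0,1) and the RIP of order 2k with radius δ_{2k} ∈ (0,1), and that δ_{2k}² + 2δ_{s+2k} < 1. Let x ∈ ℝⁿ, ε ≥ 0, y ∈ ℝᵐ with ‖y − Φx‖₂ ≤ ε, and let x* solve iBPDN. Set h = x* − x and r = x − x_T. Let T₀ ⊆ Tᶜ with #T₀ = k be a set of k largest-magnitude entries of r, let T_{|0} = T ∪ T₀, let T₁ ⊆ T_{|0}ᶜ with #T₁ = k be a set of k largest-magnitude entries of h_{T_{|0}ᶜ}, and let μ = √(δ_{s+2k}² + δ_{2k}²). Then ‖h_{T ∪ T₀ ∪ T₁}‖₂ ≤ α·ε + β·k^{−1/2}‖r − r_{T₀}‖₁, where α = 2√(1+δ_{s+2k})/(1 − δ_{s+2k} − μ) and β = 2μ/(1 − δ_{s+2k} − μ). -/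

import Mathlib

open scoped BigOperators

/-- The Euclidean (ℓ₂) norm of a vector. -/
noncomputable def l2 {d : ℕ} (u : Fin d → ℝ) : ℝ := Real.sqrt (∑ i, (u i) ^ 2)

/-- The ℓ₁ norm of a vector. -/
noncomputable def l1 {d : ℕ} (u : Fin d → ℝ) : ℝ := ∑ i, |u i|

/-- `restr S u` equals `u` on `S` and `0` outside `S`. -/
def restr {n : ℕ} (S : Finset (Fin n)) (u : Fin n → ℝ) : Fin n → ℝ :=
  fun i => if i ∈ S then u i else 0

/-- Restricted Isometry Property of order `q` with radius `δ`. -/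
def RIP {m n : ℕ} (Φ : Matrix (Fin m) (Fin n) ℝ) (q : ℕ) (δ : ℝ) : Prop :=
  ∀ u : Fin n → ℝ, (Function.support u).ncard ≤ q →
    (1 - δ) * (l2 u) ^ 2 ≤ (l2 (Φ.mulVec u)) ^ 2 ∧
    (l2 (Φ.mulVec u)) ^ 2 ≤ (1 + δ) * (l2 u) ^ 2

/-- `xs` solves the innovative Basis Pursuit DeNoise program. -/
def solvesIBPDN {m n : ℕ} (Φ : Matrix (Fin m) (Fin n) ℝ) (y : Fin m → ℝ) (ε : ℝ)
    (T : Finset (Fin n)) (xs : Fin n → ℝ) : Prop :=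
  l2 (y - Φ.mulVec xs) ≤ ε ∧
  ∀ u : Fin n → ℝ, l2 (y - Φ.mulVec u) ≤ ε → l1 (restr Tᶜ xs) ≤ l1 (restr Tᶜ u)

/-- `S` is a set of largest-magnitude entries of `r`. -/
def isLargest {n : ℕ} (r : Fin n → ℝ) (S : Finset (Fin n)) : Prop :=
  ∀ i ∈ S, ∀ j ∉ S, |r j| ≤ |r i|

section Helpers

variable {d n m : ℕ}

lemma l2_nonneg (u : Fin d → ℝ) : 0 ≤ l2 u := Real.sqrt_nonneg _
lemma l1_nonneg (u : Fin d → ℝ) : 0 ≤ l1 u := Finset.sum_nonneg fun i _ => abs_nonneg _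
lemma l2_sq (u : Fin d → ℝ) : l2 u ^ 2 = ∑ i, (u i) ^ 2 := Real.sq_sqrt (by positivity)

lemma le_of_sq_le_sq' {a b : ℝ} (hb : 0 ≤ b) (hab : a ^ 2 ≤ b ^ 2) : a ≤ b := by
  nlinarith [le_abs_self a, sq_abs a, abs_nonneg a]

lemma l2_eq_norm (u : Fin d → ℝ) :
    l2 u = ‖(WithLp.equiv 2 (Fin d → ℝ)).symm u‖ := by
  rw [EuclideanSpace.norm_eq]
  simp [l2, sq_abs]

lemma l2_tri (a b c : Fin d → ℝ) : l2 (a - c) ≤ l2 (a - b) + l2 (b - c) := by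
  simp only [l2_eq_norm]
  have h : (WithLp.equiv 2 (Fin d → ℝ)).symm (a - c)
      = (WithLp.equiv 2 (Fin d → ℝ)).symm (a - b) + (WithLp.equiv 2 (Fin d → ℝ)).symm (b - c) := by
    simp only [WithLp.equiv_symm_apply, WithLp.toLp_sub, WithLp.toLp_add]
    abel
  rw [h]
  exact norm_add_le _ _

lemma dot_eq_inner (u v : Fin d → ℝ) :
    ∑ i, u i * v i =
      (inner ℝ ((WithLp.equiv 2 (Fin d → ℝ)).symm u) ((WithLp.equiv 2 (Fin d → ℝ)).symm v) : ℝ) := by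
  rw [PiLp.inner_apply]
  simp [mul_comm]

lemma abs_dot_le (u v : Fin d → ℝ) : |∑ i, u i * v i| ≤ l2 u * l2 v := by
  rw [dot_eq_inner, l2_eq_norm, l2_eq_norm]
  exact abs_real_inner_le_norm _ _

lemma dot_self_eq (u : Fin d → ℝ) : ∑ i, u i * u i = l2 u ^ 2 := by
  rw [l2_sq]
  exact Finset.sum_congr rfl fun i _ => (sq (u i)).symm

lemma dot_left_add (p q w : Fin d → ℝ) :
    ∑ i, (p + q) i * w i = ∑ i, p i * w i + ∑ i, q i * w i := by
  rw [← Finset.sum_add_distrib]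
  exact Finset.sum_congr rfl fun i _ => by simp [add_mul]

lemma dot_right_add (w p q : Fin d → ℝ) :
    ∑ i, w i * (p + q) i = ∑ i, w i * p i + ∑ i, w i * q i := by
  rw [← Finset.sum_add_distrib]
  exact Finset.sum_congr rfl fun i _ => by simp [mul_add]

lemma l1_restr (S : Finset (Fin n)) (u : Fin n → ℝ) :
    l1 (restr S u) = ∑ i ∈ S, |u i| := by
  unfold l1 restr
  rw [← Finset.sum_subset (Finset.subset_univ S)]
  · exact Finset.sum_congr rfl fun i hi => by simp [hi]
  · intro i _ hi; simp [hi]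

lemma l2_sq_restr (S : Finset (Fin n)) (u : Fin n → ℝ) :
    l2 (restr S u) ^ 2 = ∑ i ∈ S, (u i) ^ 2 := by
  rw [l2_sq]; unfold restr
  rw [← Finset.sum_subset (Finset.subset_univ S)]
  · exact Finset.sum_congr rfl fun i hi => by simp [hi]
  · intro i _ hi; simp [hi]

lemma restr_support_ncard (S : Finset (Fin n)) (u : Fin n → ℝ) :
    (Function.support (restr S u)).ncard ≤ S.card := by
  have h : Function.support (restr S u) ⊆ (S : Set (Fin n)) := by
    intro i hi
    simp only [Function.mem_support, restr] at hi
    by_contra hc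
    rw [Finset.mem_coe] at hc
    simp [hc] at hi
  calc (Function.support (restr S u)).ncard ≤ (S : Set (Fin n)).ncard :=
        Set.ncard_le_ncard h (Finset.finite_toSet S)
    _ = S.card := Set.ncard_coe_finset S

lemma l2_sq_add (u v : Fin d → ℝ) :
    l2 (u + v) ^ 2 = l2 u ^ 2 + l2 v ^ 2 + 2 * ∑ i, u i * v i := by
  simp only [l2_sq, Pi.add_apply]
  rw [Finset.mul_sum, ← Finset.sum_add_distrib, ← Finset.sum_add_distrib]
  exact Finset.sum_congr rfl fun i _ => by ring

lemma l2_sq_sub (u v : Fin d → ℝ) :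
    l2 (u - v) ^ 2 = l2 u ^ 2 + l2 v ^ 2 - 2 * ∑ i, u i * v i := by
  simp only [l2_sq, Pi.sub_apply]
  rw [Finset.mul_sum, ← Finset.sum_add_distrib, ← Finset.sum_sub_distrib]
  exact Finset.sum_congr rfl fun i _ => by ring

lemma l2_smul (t : ℝ) (u : Fin d → ℝ) : l2 (t • u) = |t| * l2 u := by
  unfold l2
  rw [← Real.sqrt_sq_eq_abs, ← Real.sqrt_mul (sq_nonneg t), Finset.mul_sum]
  congr 1
  exact Finset.sum_congr rfl fun i _ => by simp [mul_pow]

lemma l2_sq_disj {u v : Fin d → ℝ} (hd : ∀ i, u i = 0 ∨ v i = 0) :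
    l2 (u + v) ^ 2 = l2 u ^ 2 + l2 v ^ 2 := by
  rw [l2_sq_add]
  have h0 : ∑ i, u i * v i = 0 := Finset.sum_eq_zero fun i _ => by
    rcases hd i with h | h <;> simp [h]
  rw [h0]; ring

lemma rip_l2_upper {Φ : Matrix (Fin m) (Fin n) ℝ} {q : ℕ} {δ : ℝ} (hδ : 0 ≤ δ)
    (hΦ : RIP Φ q δ) (u : Fin n → ℝ) (hu : (Function.support u).ncard ≤ q) :
    l2 (Φ.mulVec u) ≤ Real.sqrt (1 + δ) * l2 u := by
  have h := (hΦ u hu).2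
  have h2 : l2 (Φ.mulVec u) ^ 2 ≤ (Real.sqrt (1 + δ) * l2 u) ^ 2 := by
    rwa [mul_pow, Real.sq_sqrt (by linarith)]
  nlinarith [l2_nonneg (Φ.mulVec u), mul_nonneg (Real.sqrt_nonneg (1+δ)) (l2_nonneg u)]

lemma support_add_ncard {u v : Fin d → ℝ} :
    (Function.support (u + v)).ncard ≤ (Function.support u).ncard + (Function.support v).ncard := by
  have hsub : Function.support (u + v) ⊆ Function.support u ∪ Function.support v :=
    Function.support_add u v
  calc (Function.support (u + v)).ncard
      ≤ (Function.support u ∪ Function.support v).ncard :=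
        Set.ncard_le_ncard hsub ((Set.toFinite _).union (Set.toFinite _))
    _ ≤ _ := Set.ncard_union_le _ _

lemma support_smul_ncard (t : ℝ) (u : Fin d → ℝ) :
    (Function.support (t • u)).ncard ≤ (Function.support u).ncard := by
  refine Set.ncard_le_ncard ?_ (Set.toFinite _)
  intro i hi
  simp only [Function.mem_support, Pi.smul_apply, smul_eq_mul] at hi ⊢
  exact fun h => hi (by rw [h]; ring)

lemma l2_eq_zero {u : Fin d → ℝ} (h : l2 u = 0) : u = 0 := by
  have h2 : ∑ i, (u i) ^ 2 = 0 := by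
    have := l2_sq u
    rw [h] at this
    simpa using this.symm
  funext i
  have hnn : ∀ j ∈ Finset.univ, (0:ℝ) ≤ (u j) ^ 2 := fun j _ => sq_nonneg _
  have := (Finset.sum_eq_zero_iff_of_nonneg hnn).mp h2 i (Finset.mem_univ i)
  exact pow_eq_zero_iff (n := 2) (by norm_num) |>.mp this

lemma l2_pos {u : Fin d → ℝ} (h : u ≠ 0) : 0 < l2 u := by
  rcases (l2_nonneg u).lt_or_eq with h' | h'
  · exact h'
  · exact absurd (l2_eq_zero h'.symm) h

lemma support_sub_ncard {u v : Fin d → ℝ} :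
    (Function.support (u - v)).ncard ≤ (Function.support u).ncard + (Function.support v).ncard := by
  have h1 : u - v = u + (-1 : ℝ) • v := by funext i; simp; ring
  rw [h1]
  exact le_trans support_add_ncard (by
    have := support_smul_ncard (-1 : ℝ) v
    omega)

/-- Cross-RIP: disjointly supported vectors are nearly orthogonal after `Φ`. -/
lemma cross_rip {Φ : Matrix (Fin m) (Fin n) ℝ} {q : ℕ} {δ : ℝ}
    (hΦ : RIP Φ q δ) (u v : Fin n → ℝ)
    (hd : ∀ i, u i = 0 ∨ v i = 0)
    (hcard : (Function.support u).ncard + (Function.support v).ncard ≤ q) :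
    |∑ i, Φ.mulVec u i * Φ.mulVec v i| ≤ δ * (l2 u * l2 v) := by
  rcases eq_or_ne u 0 with rfl | hu0
  · simp [Matrix.mulVec_zero, l2]
  rcases eq_or_ne v 0 with rfl | hv0
  · simp [Matrix.mulVec_zero, l2]
  have hul : 0 < l2 u := l2_pos hu0
  have hvl : 0 < l2 v := l2_pos hv0
  set t : ℝ := Real.sqrt (l2 v / l2 u) with ht
  have ht0 : 0 < t := Real.sqrt_pos.mpr (div_pos hvl hul)
  set u1 : Fin n → ℝ := t • u with hu1
  set v1 : Fin n → ℝ := t⁻¹ • v with hv1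
  have hd1 : ∀ i, u1 i = 0 ∨ v1 i = 0 := fun i => by
    rcases hd i with h | h
    · left; simp [hu1, h]
    · right; simp [hv1, h]
  have hd1' : ∀ i, u1 i = 0 ∨ (-v1) i = 0 := fun i => by
    rcases hd1 i with h | h
    · left; exact h
    · right; simp [h]
  have ht2 : t ^ 2 = l2 v / l2 u := Real.sq_sqrt (le_of_lt (div_pos hvl hul))
  have hu1l : l2 u1 ^ 2 = l2 u * l2 v := by
    rw [hu1, l2_smul, mul_pow, sq_abs, ht2]
    field_simp
  have hv1l : l2 v1 ^ 2 = l2 u * l2 v := by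
    rw [hv1, l2_smul, mul_pow, sq_abs, inv_pow, ht2]
    rw [inv_div]
    field_simp
  have hdot : ∑ i, Φ.mulVec u1 i * Φ.mulVec v1 i = ∑ i, Φ.mulVec u i * Φ.mulVec v i := by
    have e1 : Φ.mulVec u1 = t • Φ.mulVec u := by
      rw [hu1]; exact Matrix.mulVec_smul Φ t u
    have e2 : Φ.mulVec v1 = t⁻¹ • Φ.mulVec v := by
      rw [hv1]; exact Matrix.mulVec_smul Φ t⁻¹ v
    rw [e1, e2]
    refine Finset.sum_congr rfl fun i _ => ?_
    simp only [Pi.smul_apply, smul_eq_mul]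
    field_simp
  have hsupadd : (Function.support (u1 + v1)).ncard ≤ q := by
    refine le_trans support_add_ncard (le_trans ?_ hcard)
    have h1 := support_smul_ncard t u
    have h2 := support_smul_ncard t⁻¹ v
    rw [← hu1] at h1; rw [← hv1] at h2
    omega
  have hsupsub : (Function.support (u1 - v1)).ncard ≤ q := by
    refine le_trans support_sub_ncard (le_trans ?_ hcard)
    have h1 := support_smul_ncard t u
    have h2 := support_smul_ncard t⁻¹ v
    rw [← hu1] at h1; rw [← hv1] at h2
    omega
  have hplus := hΦ (u1 + v1) hsupadd
  have hminus := hΦ (u1 - v1) hsupsub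
  have hPadd : Φ.mulVec (u1 + v1) = Φ.mulVec u1 + Φ.mulVec v1 := Matrix.mulVec_add Φ u1 v1
  have hPsub : Φ.mulVec (u1 - v1) = Φ.mulVec u1 - Φ.mulVec v1 := Matrix.mulVec_sub Φ u1 v1
  have hLadd : l2 (u1 + v1) ^ 2 = 2 * (l2 u * l2 v) := by
    rw [l2_sq_disj hd1, hu1l, hv1l]; ring
  have hLsub : l2 (u1 - v1) ^ 2 = 2 * (l2 u * l2 v) := by
    have hsub : u1 - v1 = u1 + (-v1) := by funext i; simp [sub_eq_add_neg]
    rw [hsub, l2_sq_disj hd1', hu1l]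
    have hneg : l2 (-v1) ^ 2 = l2 v1 ^ 2 := by
      simp only [l2_sq]
      exact Finset.sum_congr rfl fun i _ => by simp
    rw [hneg, hv1l]; ring
  have key : 4 * ∑ i, Φ.mulVec u1 i * Φ.mulVec v1 i
      = l2 (Φ.mulVec (u1 + v1)) ^ 2 - l2 (Φ.mulVec (u1 - v1)) ^ 2 := by
    rw [hPadd, hPsub, l2_sq_add, l2_sq_sub]; ring
  rw [← hdot]
  rw [abs_le]
  constructor
  · have h1 : (1 - δ) * (2 * (l2 u * l2 v)) ≤ l2 (Φ.mulVec (u1 + v1)) ^ 2 := by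
      rw [← hLadd]; exact hplus.1
    have h2 : l2 (Φ.mulVec (u1 - v1)) ^ 2 ≤ (1 + δ) * (2 * (l2 u * l2 v)) := by
      rw [← hLsub]; exact hminus.2
    nlinarith [key]
  · have h1 : l2 (Φ.mulVec (u1 + v1)) ^ 2 ≤ (1 + δ) * (2 * (l2 u * l2 v)) := by
      rw [← hLadd]; exact hplus.2
    have h2 : (1 - δ) * (2 * (l2 u * l2 v)) ≤ l2 (Φ.mulVec (u1 - v1)) ^ 2 := by
      rw [← hLsub]; exact hminus.1
    nlinarith [key]

/-- existence of a subset of `min k' R.card` largest entries -/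
lemma exists_largest_subset (g : Fin n → ℝ) (R : Finset (Fin n)) (k' : ℕ) :
    ∃ S : Finset (Fin n), S ⊆ R ∧ S.card = min k' R.card ∧
      ∀ i ∈ S, ∀ j ∈ R \ S, |g j| ≤ |g i| := by
  induction k' with
  | zero => exact ⟨∅, Finset.empty_subset R, by simp, by simp⟩
  | succ k' ih =>
    obtain ⟨S, hSR, hScard, hSmax⟩ := ih
    by_cases hlt : k' < R.card
    · have hmin : S.card = k' := by omega
      have hne : (R \ S).Nonempty := by
        rw [← Finset.card_pos, Finset.card_sdiff_of_subset hSR]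
        omega
      obtain ⟨j₀, hj₀mem, hj₀max⟩ := Finset.exists_max_image (R \ S) (fun j => |g j|) hne
      refine ⟨insert j₀ S, ?_, ?_, ?_⟩
      · intro i hi
        rcases Finset.mem_insert.mp hi with rfl | hi
        · exact (Finset.mem_sdiff.mp hj₀mem).1
        · exact hSR hi
      · rw [Finset.card_insert_of_notMem (Finset.mem_sdiff.mp hj₀mem).2, hmin]
        omega
      · intro i hi j hj
        have hjRS : j ∈ R \ S := by
          rw [Finset.mem_sdiff] at hj ⊢
          exact ⟨hj.1, fun hjS => hj.2 (Finset.mem_insert_of_mem hjS)⟩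
        rcases Finset.mem_insert.mp hi with rfl | hi
        · exact hj₀max j hjRS
        · exact hSmax i hi j hjRS
    · refine ⟨S, hSR, ?_, hSmax⟩
      omega

lemma restr_split {R S : Finset (Fin n)} (hS : S ⊆ R) (u : Fin n → ℝ) :
    restr R u = restr S u + restr (R \ S) u := by
  funext i
  simp only [restr, Pi.add_apply, Finset.mem_sdiff]
  by_cases h1 : i ∈ S
  · simp [h1, hS h1]
  · by_cases h2 : i ∈ R <;> simp [h1, h2]

lemma l1_restr_split {R S : Finset (Fin n)} (hS : S ⊆ R) (u : Fin n → ℝ) :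
    l1 (restr R u) = l1 (restr S u) + l1 (restr (R \ S) u) := by
  rw [l1_restr, l1_restr, l1_restr, ← Finset.sum_sdiff hS]
  ring

lemma l2_restr_le_bound {S : Finset (Fin n)} {u : Fin n → ℝ} {b : ℝ} (hb : 0 ≤ b)
    (h : ∀ i ∈ S, |u i| ≤ b) : l2 (restr S u) ≤ Real.sqrt S.card * b := by
  apply le_of_sq_le_sq' (by positivity)
  rw [mul_pow, Real.sq_sqrt (Nat.cast_nonneg _), l2_sq_restr]
  calc ∑ i ∈ S, (u i) ^ 2 ≤ ∑ _i ∈ S, b ^ 2 := by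
        refine Finset.sum_le_sum fun i hi => ?_
        have hle := h i hi
        nlinarith [abs_nonneg (u i), sq_abs (u i)]
    _ = S.card * b ^ 2 := by rw [Finset.sum_const, nsmul_eq_mul]

lemma l1_restr_le_sqrt (S : Finset (Fin n)) (u : Fin n → ℝ) :
    l1 (restr S u) ≤ Real.sqrt S.card * l2 (restr S u) := by
  apply le_of_sq_le_sq' (mul_nonneg (Real.sqrt_nonneg _) (l2_nonneg _))
  rw [mul_pow, Real.sq_sqrt (Nat.cast_nonneg _), l2_sq_restr, l1_restr]
  have h := sq_sum_le_card_mul_sum_sq (s := S) (f := fun i => |u i|)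
  simpa [sq_abs] using h

lemma restr_compl_add (S : Finset (Fin n)) (u : Fin n → ℝ) :
    restr S u + restr Sᶜ u = u := by
  funext i
  simp only [restr, Pi.add_apply, Finset.mem_compl]
  by_cases h1 : i ∈ S <;> simp [h1]

/-- Tail blocks bound, by strong induction on the remaining index set. -/
lemma blocks_bound (Φ : Matrix (Fin m) (Fin n) ℝ) (a h : Fin n → ℝ) (k : ℕ) (hk : 1 ≤ k)
    (D : Finset (Fin n)) (M : ℝ) (hM : 0 ≤ M)
    (hcross : ∀ W : Finset (Fin n), W ⊆ D → W.card ≤ k →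
      |∑ i, Φ.mulVec a i * Φ.mulVec (restr W h) i| ≤ M * l2 (restr W h)) :
    ∀ N : ℕ, ∀ R : Finset (Fin n), R.card ≤ N → R ⊆ D → ∀ b : ℝ, 0 ≤ b →
      (∀ i ∈ R, |h i| ≤ b) →
      |∑ i, Φ.mulVec a i * Φ.mulVec (restr R h) i|
        ≤ M * (Real.sqrt k * b + (Real.sqrt k)⁻¹ * l1 (restr R h)) := by
  have hk0 : (0:ℝ) < (k:ℝ) := by exact_mod_cast hk
  have hsqk : (0:ℝ) < Real.sqrt k := Real.sqrt_pos.mpr hk0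
  have hsqksq : Real.sqrt k * Real.sqrt k = (k:ℝ) := Real.mul_self_sqrt hk0.le
  intro N
  induction N with
  | zero =>
    intro R hR _ b hb _
    have hRe : R = ∅ := Finset.card_eq_zero.mp (Nat.le_zero.mp hR)
    subst hRe
    have h0 : restr (∅ : Finset (Fin n)) h = 0 := by
      funext i; simp [restr]
    have hz : ∑ i, Φ.mulVec a i * Φ.mulVec (restr (∅ : Finset (Fin n)) h) i = 0 := by
      rw [h0, Matrix.mulVec_zero]; simp
    rw [hz, abs_zero]
    have h4 : (0:ℝ) ≤ l1 (restr (∅ : Finset (Fin n)) h) := l1_nonneg _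
    have h2 : (0:ℝ) ≤ Real.sqrt k * b := by positivity
    have h3 : (0:ℝ) ≤ (Real.sqrt k)⁻¹ * l1 (restr (∅ : Finset (Fin n)) h) :=
      mul_nonneg (by positivity) h4
    nlinarith
  | succ N ih =>
    intro R hR hRD b hb hbR
    obtain ⟨S, hSR, hScard, hSmax⟩ := exists_largest_subset h R k
    have hSk : S.card ≤ k := by omega
    have hsplit := restr_split hSR h
    have hl1split := l1_restr_split hSR h
    have key : ∑ i, Φ.mulVec a i * Φ.mulVec (restr R h) i
        = ∑ i, Φ.mulVec a i * Φ.mulVec (restr S h) i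
          + ∑ i, Φ.mulVec a i * Φ.mulVec (restr (R \ S) h) i := by
      rw [hsplit, Matrix.mulVec_add, dot_right_add]
    rw [key]
    have hS1 : |∑ i, Φ.mulVec a i * Φ.mulVec (restr S h) i| ≤ M * (Real.sqrt k * b) := by
      refine le_trans (hcross S (hSR.trans hRD) hSk) ?_
      refine mul_le_mul_of_nonneg_left ?_ hM
      refine le_trans (l2_restr_le_bound hb fun i hi => hbR i (hSR hi)) ?_
      refine mul_le_mul_of_nonneg_right ?_ hb
      exact Real.sqrt_le_sqrt (by exact_mod_cast hSk)
    by_cases hRS : R \ S = ∅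
    · have h0 : restr (R \ S) h = 0 := by
        rw [hRS]; funext i; simp [restr]
      have hz : ∑ i, Φ.mulVec a i * Φ.mulVec (restr (R \ S) h) i = 0 := by
        rw [h0, Matrix.mulVec_zero]; simp
      rw [hz, add_zero]
      refine le_trans hS1 ?_
      have h3 : (0:ℝ) ≤ (Real.sqrt k)⁻¹ * l1 (restr R h) :=
        mul_nonneg (by positivity) (l1_nonneg _)
      nlinarith
    · have hSfull : S.card = k := by
        by_contra hne
        have hcards : S.card = R.card := by omega
        have : S = R := Finset.eq_of_subset_of_card_le hSR (le_of_eq hcards.symm)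
        subst this
        exact hRS (Finset.sdiff_self S)
      set L : ℝ := l1 (restr S h) with hL
      have hL0 : 0 ≤ L := l1_nonneg _
      have hb' : ∀ i ∈ R \ S, |h i| ≤ (k:ℝ)⁻¹ * L := by
        intro i hi
        have hper : ∀ j ∈ S, |h i| ≤ |h j| := fun j hj => hSmax j hj i hi
        have hsum : (S.card : ℝ) * |h i| ≤ L := by
          rw [hL, l1_restr]
          calc (S.card : ℝ) * |h i| = ∑ _j ∈ S, |h i| := by
                rw [Finset.sum_const, nsmul_eq_mul]
            _ ≤ ∑ j ∈ S, |h j| := Finset.sum_le_sum fun j hj => hper j hj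
        rw [hSfull] at hsum
        rw [inv_mul_eq_div, le_div_iff₀ hk0]
        linarith [hsum]
      have hb'0 : (0:ℝ) ≤ (k:ℝ)⁻¹ * L := by positivity
      have hcard' : (R \ S).card ≤ N := by
        rw [Finset.card_sdiff_of_subset hSR]
        omega
      have h2 := ih (R \ S) hcard' ((Finset.sdiff_subset).trans hRD) _ hb'0 hb'
      have hki : Real.sqrt k * (k:ℝ)⁻¹ = (Real.sqrt k)⁻¹ := by
        field_simp
        exact Real.sq_sqrt hk0.le
      have hconv : Real.sqrt k * ((k:ℝ)⁻¹ * L) = (Real.sqrt k)⁻¹ * L := by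
        rw [← mul_assoc, hki]
      calc |∑ i, Φ.mulVec a i * Φ.mulVec (restr S h) i
            + ∑ i, Φ.mulVec a i * Φ.mulVec (restr (R \ S) h) i|
          ≤ |∑ i, Φ.mulVec a i * Φ.mulVec (restr S h) i|
            + |∑ i, Φ.mulVec a i * Φ.mulVec (restr (R \ S) h) i| := abs_add_le _ _
        _ ≤ M * (Real.sqrt k * b)
            + M * (Real.sqrt k * ((k:ℝ)⁻¹ * L) + (Real.sqrt k)⁻¹ * l1 (restr (R \ S) h)) := by
            exact add_le_add hS1 h2
        _ = M * (Real.sqrt k * b + (Real.sqrt k)⁻¹ * (L + l1 (restr (R \ S) h))) := by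
            rw [hconv]; ring
        _ = M * (Real.sqrt k * b + (Real.sqrt k)⁻¹ * l1 (restr R h)) := by
            rw [hl1split]

end Helpers
set_option maxHeartbeats 1000000 in
/-- **Bound on the ℓ₂ norm of the iBPDN error on `T ∪ T₀ ∪ T₁`.** -/
theorem ibpdn_head_bound
    {m n : ℕ} (Φ : Matrix (Fin m) (Fin n) ℝ)
    (T : Finset (Fin n)) (s k : ℕ) (hs : T.card = s) (hk : 1 ≤ k)
    (δsk δk : ℝ) (hδsk : δsk ∈ Set.Ioo (0 : ℝ) 1) (hδk : δk ∈ Set.Ioo (0 : ℝ) 1)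
    (hRIPsk : RIP Φ (s + 2 * k) δsk) (hRIPk : RIP Φ (2 * k) δk)
    (hcond : δk ^ 2 + 2 * δsk < 1)
    (x : Fin n → ℝ) (ε : ℝ) (hε : 0 ≤ ε)
    (y : Fin m → ℝ) (hy : l2 (y - Φ.mulVec x) ≤ ε)
    (xstar : Fin n → ℝ) (hsol : solvesIBPDN Φ y ε T xstar)
    (h : Fin n → ℝ) (hh : h = xstar - x)
    (r : Fin n → ℝ) (hr : r = x - restr T x)
    (T₀ : Finset (Fin n)) (hT₀sub : T₀ ⊆ Tᶜ) (hT₀card : T₀.card = k)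
    (hT₀ : isLargest r T₀)
    (T₁ : Finset (Fin n)) (hT₁sub : T₁ ⊆ (T ∪ T₀)ᶜ) (hT₁card : T₁.card = k)
    (hT₁ : isLargest (restr (T ∪ T₀)ᶜ h) T₁)
    (μ : ℝ) (hμ : μ = Real.sqrt (δsk ^ 2 + δk ^ 2)) :
    l2 (restr (T ∪ T₀ ∪ T₁) h) ≤
      (2 * Real.sqrt (1 + δsk) / (1 - δsk - μ)) * ε
        + (2 * μ / (1 - δsk - μ)) * ((Real.sqrt k)⁻¹ * l1 (r - restr T₀ r)) := by
  obtain ⟨hδsk0, hδsk1⟩ := hδsk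
  obtain ⟨hδk0, hδk1⟩ := hδk
  have hk0 : (0:ℝ) < (k:ℝ) := by exact_mod_cast hk
  have hsqk : (0:ℝ) < Real.sqrt k := Real.sqrt_pos.mpr hk0
  have hsqksq : Real.sqrt k * Real.sqrt k = (k:ℝ) := Real.mul_self_sqrt hk0.le
  have hμ0 : 0 ≤ μ := hμ ▸ Real.sqrt_nonneg _
  have hμsq : μ ^ 2 = δsk ^ 2 + δk ^ 2 := by
    rw [hμ]; exact Real.sq_sqrt (by positivity)
  have hμlt : μ < 1 - δsk := by nlinarith [hμ0, hμsq]
  have hc : 0 < 1 - δsk - μ := by linarith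
  set U : Finset (Fin n) := T ∪ T₀ ∪ T₁ with hU
  set ρ : ℝ := l1 (r - restr T₀ r) with hρ
  have hρ0 : 0 ≤ ρ := l1_nonneg _
  -- memberships
  have hT₁U : ∀ i ∈ T₁, i ∉ T ∪ T₀ := fun i hi => Finset.mem_compl.mp (hT₁sub hi)
  -- card facts
  have hTT₀card : (T ∪ T₀).card ≤ s + k := by
    refine le_trans (Finset.card_union_le _ _) ?_
    rw [hs, hT₀card]
  have hUcard : U.card ≤ s + 2 * k := by
    rw [hU]
    refine le_trans (Finset.card_union_le _ _) ?_
    rw [hT₁card]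
    omega
  set a : Fin n → ℝ := restr U h with ha
  set A : ℝ := l2 a with hA
  have hA0 : 0 ≤ A := l2_nonneg _
  -- split of a
  have hTT₀U : T ∪ T₀ ⊆ U := by rw [hU]; exact Finset.subset_union_left
  have hUsd : U \ (T ∪ T₀) = T₁ := by
    ext i
    have hdis : i ∈ T₁ → ¬(i ∈ T ∨ i ∈ T₀) := fun hi => by
      have := Finset.mem_compl.mp (hT₁sub hi)
      simpa [Finset.mem_union] using this
    simp only [hU, Finset.mem_sdiff, Finset.mem_union]
    tauto
  have hasplit : a = restr (T ∪ T₀) h + restr T₁ h := by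
    rw [ha, restr_split hTT₀U h, hUsd]
  have hAsq : l2 (restr (T ∪ T₀) h) ^ 2 + l2 (restr T₁ h) ^ 2 = A ^ 2 := by
    rw [hA, hasplit, l2_sq_disj]
    intro i
    by_cases hi : i ∈ T ∪ T₀
    · right
      have : i ∉ T₁ := fun hmem => hT₁U i hmem hi
      simp [restr, this]
    · left; simp [restr, hi]
  -- the cross bound
  have hcross : ∀ W : Finset (Fin n), W ⊆ Uᶜ → W.card ≤ k →
      |∑ i, Φ.mulVec a i * Φ.mulVec (restr W h) i| ≤ (μ * A) * l2 (restr W h) := by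
    intro W hW hWk
    have hWU : ∀ i ∈ W, i ∉ U := fun i hi => Finset.mem_compl.mp (hW hi)
    have hd1 : ∀ i, restr (T ∪ T₀) h i = 0 ∨ restr W h i = 0 := by
      intro i
      by_cases hi : i ∈ T ∪ T₀
      · right
        have hiU : i ∈ U := by rw [hU]; exact Finset.mem_union_left _ hi
        have : i ∉ W := fun hiW => hWU i hiW hiU
        simp [restr, this]
      · left; simp [restr, hi]
    have hd2 : ∀ i, restr T₁ h i = 0 ∨ restr W h i = 0 := by
      intro i
      by_cases hi : i ∈ T₁
      · right
        have hiU : i ∈ U := by rw [hU]; exact Finset.mem_union_right _ hi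
        have : i ∉ W := fun hiW => hWU i hiW hiU
        simp [restr, this]
      · left; simp [restr, hi]
    have hcard1 : (Function.support (restr (T ∪ T₀) h)).ncard
        + (Function.support (restr W h)).ncard ≤ s + 2 * k := by
      have h1 := restr_support_ncard (T ∪ T₀) h
      have h2 := restr_support_ncard W h
      omega
    have hcard2 : (Function.support (restr T₁ h)).ncard
        + (Function.support (restr W h)).ncard ≤ 2 * k := by
      have h1 := restr_support_ncard T₁ h
      have h2 := restr_support_ncard W h
      omega
    have hc1 := cross_rip hRIPsk (restr (T ∪ T₀) h) (restr W h) hd1 hcard1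
    have hc2 := cross_rip hRIPk (restr T₁ h) (restr W h) hd2 hcard2
    have hsum : ∑ i, Φ.mulVec a i * Φ.mulVec (restr W h) i
        = ∑ i, Φ.mulVec (restr (T ∪ T₀) h) i * Φ.mulVec (restr W h) i
          + ∑ i, Φ.mulVec (restr T₁ h) i * Φ.mulVec (restr W h) i := by
      conv_lhs => rw [hasplit]
      rw [Matrix.mulVec_add, dot_left_add]
    rw [hsum]
    refine le_trans (abs_add_le _ _) ?_
    refine le_trans (add_le_add hc1 hc2) ?_
    set x1 := l2 (restr (T ∪ T₀) h) with hx1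
    set x2 := l2 (restr T₁ h) with hx2
    have hx10 : 0 ≤ x1 := l2_nonneg _
    have hx20 : 0 ≤ x2 := l2_nonneg _
    have hlw : 0 ≤ l2 (restr W h) := l2_nonneg _
    have hkey : δsk * x1 + δk * x2 ≤ μ * A := by
      have hab : (δsk * x1 + δk * x2) ^ 2 ≤ (μ * A) ^ 2 := by
        have h1 : (μ * A) ^ 2 = (δsk ^ 2 + δk ^ 2) * (x1 ^ 2 + x2 ^ 2) := by
          rw [mul_pow, hμsq, ← hAsq]
        nlinarith [sq_nonneg (δsk * x2 - δk * x1)]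
      exact le_of_sq_le_sq' (mul_nonneg hμ0 hA0) hab
    nlinarith [mul_le_mul_of_nonneg_right hkey hlw]
  -- entries outside U are dominated by the average of T₁
  set L1 : ℝ := l1 (restr T₁ h) with hL1
  have hL10 : 0 ≤ L1 := l1_nonneg _
  have houtb : ∀ i ∈ Uᶜ, |h i| ≤ (k:ℝ)⁻¹ * L1 := by
    intro i hi
    have hiU : i ∉ U := Finset.mem_compl.mp hi
    have hiTT₀ : i ∈ (T ∪ T₀)ᶜ := Finset.mem_compl.mpr fun hmem =>
      hiU (by rw [hU]; exact Finset.mem_union_left _ hmem)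
    have hiT₁ : i ∉ T₁ := fun hmem => hiU (by rw [hU]; exact Finset.mem_union_right _ hmem)
    have hper : ∀ j ∈ T₁, |h i| ≤ |h j| := by
      intro j hj
      have hcomp := hT₁ j hj i hiT₁
      have e1 : restr (T ∪ T₀)ᶜ h i = h i := by unfold restr; rw [if_pos hiTT₀]
      have e2 : restr (T ∪ T₀)ᶜ h j = h j := by unfold restr; rw [if_pos (hT₁sub hj)]
      rwa [e1, e2] at hcomp
    have hsum : (k:ℝ) * |h i| ≤ L1 := by
      rw [hL1, l1_restr]
      calc (k:ℝ) * |h i| = ∑ _j ∈ T₁, |h i| := by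
            rw [Finset.sum_const, nsmul_eq_mul, hT₁card]
        _ ≤ ∑ j ∈ T₁, |h j| := Finset.sum_le_sum fun j hj => hper j hj
    rw [inv_mul_eq_div, le_div_iff₀ hk0]
    linarith
  -- feasibility: ‖Φ h‖ ≤ 2 ε
  have hΦh : l2 (Φ.mulVec h) ≤ 2 * ε := by
    have h1 : Φ.mulVec h = Φ.mulVec xstar - Φ.mulVec x := by
      rw [hh, Matrix.mulVec_sub]
    rw [h1]
    have htri := l2_tri (Φ.mulVec xstar) y (Φ.mulVec x)
    have hcomm : l2 (Φ.mulVec xstar - y) = l2 (y - Φ.mulVec xstar) := by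
      simp only [l2, Pi.sub_apply]
      congr 1
      exact Finset.sum_congr rfl fun i _ => by ring
    have hfeas := hsol.1
    rw [hcomm] at htri
    linarith
  -- the cone constraint
  have hTT₀c : (T ∪ T₀)ᶜ = Tᶜ \ T₀ := by
    ext i
    simp only [Finset.mem_compl, Finset.mem_sdiff, Finset.mem_union]
    tauto
  have hrT : ∀ i ∈ T, r i = 0 := fun i hi => by rw [hr]; simp [restr, hi]
  have hxr : ∀ i ∈ Tᶜ, x i = r i := fun i hi => by
    rw [hr]; simp [restr, Finset.mem_compl.mp hi]
  have hxs : ∀ i, xstar i = x i + h i := fun i => by rw [hh]; simp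
  have hρeq : ρ = ∑ i ∈ T₀ᶜ, |r i| := by
    rw [hρ]
    have e : r - restr T₀ r = restr T₀ᶜ r := by
      funext i
      by_cases hi : i ∈ T₀ <;> simp [restr, hi]
    rw [e, l1_restr]
  have hcone : l1 (restr (T ∪ T₀)ᶜ h) ≤ l1 (restr T₀ h) + 2 * ρ := by
    have habs : ∀ i ∈ Tᶜ, |xstar i| = |r i + h i| := fun i hi => by
      rw [hxs i, hxr i hi]
    have habs2 : ∀ i : Fin n, |r i| - |h i| ≤ |r i + h i| := fun i => by
      have := abs_sub_abs_le_abs_sub (r i) (-(h i))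
      simpa [sub_neg_eq_add] using this
    have habs3 : ∀ i : Fin n, |h i| - |r i| ≤ |r i + h i| := fun i => by
      have := abs_sub_abs_le_abs_sub (h i) (-(r i))
      have e : h i - -(r i) = r i + h i := by ring
      rwa [abs_neg, e] at this
    have hopt := hsol.2 x hy
    rw [l1_restr, l1_restr] at hopt
    have hS0 : ∑ i ∈ T₀, (|r i| - |h i|) ≤ ∑ i ∈ T₀, |xstar i| :=
      Finset.sum_le_sum fun i hi => by
        rw [habs i (hT₀sub hi)]; exact habs2 i
    have hS1 : ∑ i ∈ Tᶜ \ T₀, (|h i| - |r i|) ≤ ∑ i ∈ Tᶜ \ T₀, |xstar i| :=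
      Finset.sum_le_sum fun i hi => by
        rw [habs i (Finset.mem_sdiff.mp hi).1]; exact habs3 i
    have hxsum : ∑ i ∈ Tᶜ, |x i| = ∑ i ∈ Tᶜ, |r i| :=
      Finset.sum_congr rfl fun i hi => by rw [hxr i hi]
    have hsd1 : ∑ i ∈ Tᶜ \ T₀, |xstar i| + ∑ i ∈ T₀, |xstar i| = ∑ i ∈ Tᶜ, |xstar i| :=
      Finset.sum_sdiff hT₀sub
    have hsd2 : ∑ i ∈ Tᶜ \ T₀, |r i| + ∑ i ∈ T₀, |r i| = ∑ i ∈ Tᶜ, |r i| :=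
      Finset.sum_sdiff hT₀sub
    have hd0 : ∑ i ∈ T₀, (|r i| - |h i|) = ∑ i ∈ T₀, |r i| - ∑ i ∈ T₀, |h i| :=
      Finset.sum_sub_distrib _ _
    have hd1 : ∑ i ∈ Tᶜ \ T₀, (|h i| - |r i|)
        = ∑ i ∈ Tᶜ \ T₀, |h i| - ∑ i ∈ Tᶜ \ T₀, |r i| :=
      Finset.sum_sub_distrib _ _
    have hsubρ : ∑ i ∈ Tᶜ \ T₀, |r i| ≤ ρ := by
      rw [hρeq]
      refine Finset.sum_le_sum_of_subset_of_nonneg ?_ (fun i _ _ => abs_nonneg _)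
      intro i hi
      exact Finset.mem_compl.mpr (Finset.mem_sdiff.mp hi).2
    have hlhs : l1 (restr (T ∪ T₀)ᶜ h) = ∑ i ∈ Tᶜ \ T₀, |h i| := by
      rw [l1_restr, hTT₀c]
    have hrhs : l1 (restr T₀ h) = ∑ i ∈ T₀, |h i| := l1_restr T₀ h
    rw [hlhs, hrhs]
    linarith
  -- RIP lower bound on the head
  have hasupp : (Function.support a).ncard ≤ s + 2 * k :=
    le_trans (restr_support_ncard U h) hUcard
  have hlow : (1 - δsk) * A ^ 2 ≤ l2 (Φ.mulVec a) ^ 2 := (hRIPsk a hasupp).1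
  -- decomposition of Φh
  have hhsplit : h = a + restr Uᶜ h := by
    rw [ha]; exact (restr_compl_add U h).symm
  have hdoth : ∑ i, Φ.mulVec a i * Φ.mulVec h i
      = l2 (Φ.mulVec a) ^ 2 + ∑ i, Φ.mulVec a i * Φ.mulVec (restr Uᶜ h) i := by
    conv_lhs => rw [hhsplit]
    rw [Matrix.mulVec_add, dot_right_add, dot_self_eq]
  -- main inner product bound
  have hmain : ∑ i, Φ.mulVec a i * Φ.mulVec h i ≤ Real.sqrt (1 + δsk) * A * (2 * ε) := by
    refine le_trans (le_abs_self _) (le_trans (abs_dot_le _ _) ?_)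
    have h1 : l2 (Φ.mulVec a) ≤ Real.sqrt (1 + δsk) * A :=
      rip_l2_upper hδsk0.le hRIPsk a hasupp
    calc l2 (Φ.mulVec a) * l2 (Φ.mulVec h)
        ≤ (Real.sqrt (1 + δsk) * A) * (2 * ε) :=
          mul_le_mul h1 hΦh (l2_nonneg _) (mul_nonneg (Real.sqrt_nonneg _) hA0)
      _ = Real.sqrt (1 + δsk) * A * (2 * ε) := by ring
  -- tail bound via blocks
  have htail := blocks_bound Φ a h k hk Uᶜ (μ * A) (mul_nonneg hμ0 hA0) hcross
    (Uᶜ.card) Uᶜ le_rfl subset_rfl ((k:ℝ)⁻¹ * L1)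
    (mul_nonneg (by positivity) hL10) houtb
  have hT₁sd : (T ∪ T₀)ᶜ \ T₁ = Uᶜ := by
    ext i
    simp only [hU, Finset.mem_sdiff, Finset.mem_compl, Finset.mem_union]
    tauto
  have hl1out : l1 (restr (T ∪ T₀)ᶜ h) = L1 + l1 (restr Uᶜ h) := by
    rw [l1_restr_split hT₁sub h, hT₁sd, hL1]
  have hki : Real.sqrt k * ((k:ℝ)⁻¹ * L1) = (Real.sqrt k)⁻¹ * L1 := by
    have e : Real.sqrt k * (k:ℝ)⁻¹ = (Real.sqrt k)⁻¹ := by field_simp; exact Real.sq_sqrt hk0.le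
    rw [← mul_assoc, e]
  have htail2 : |∑ i, Φ.mulVec a i * Φ.mulVec (restr Uᶜ h) i|
      ≤ μ * A * ((Real.sqrt k)⁻¹ * l1 (restr (T ∪ T₀)ᶜ h)) := by
    refine le_trans htail (le_of_eq ?_)
    rw [hki, hl1out]
    ring
  -- ℓ¹–ℓ² bound on T₀
  have hT₀l1 : l1 (restr T₀ h) ≤ Real.sqrt k * A := by
    refine le_trans (l1_restr_le_sqrt T₀ h) ?_
    rw [hT₀card]
    refine mul_le_mul_of_nonneg_left ?_ (Real.sqrt_nonneg _)
    apply le_of_sq_le_sq' hA0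
    rw [l2_sq_restr, hA, ha, l2_sq_restr]
    refine Finset.sum_le_sum_of_subset_of_nonneg ?_ (fun i _ _ => sq_nonneg _)
    intro i hi
    rw [hU]
    exact Finset.mem_union_left _ (Finset.mem_union_right _ hi)
  -- combine everything
  have hinv : (Real.sqrt k)⁻¹ * Real.sqrt k = 1 := inv_mul_cancel₀ hsqk.ne'
  have hd2b : |∑ i, Φ.mulVec a i * Φ.mulVec (restr Uᶜ h) i|
      ≤ μ * A * A + 2 * μ * A * ((Real.sqrt k)⁻¹ * ρ) := by
    refine le_trans htail2 ?_
    have h1 : l1 (restr (T ∪ T₀)ᶜ h) ≤ Real.sqrt k * A + 2 * ρ := by linarith [hcone, hT₀l1]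
    have h2 : μ * A * ((Real.sqrt k)⁻¹ * l1 (restr (T ∪ T₀)ᶜ h))
        ≤ μ * A * ((Real.sqrt k)⁻¹ * (Real.sqrt k * A + 2 * ρ)) := by
      refine mul_le_mul_of_nonneg_left ?_ (mul_nonneg hμ0 hA0)
      exact mul_le_mul_of_nonneg_left h1 (by positivity)
    refine le_trans h2 (le_of_eq ?_)
    have e : (Real.sqrt k)⁻¹ * (Real.sqrt k * A + 2 * ρ) = A + 2 * ((Real.sqrt k)⁻¹ * ρ) := by
      rw [mul_add, ← mul_assoc, hinv]; ring
    rw [e]; ring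
  have hneg : -(∑ i, Φ.mulVec a i * Φ.mulVec (restr Uᶜ h) i)
      ≤ |∑ i, Φ.mulVec a i * Φ.mulVec (restr Uᶜ h) i| := neg_le_abs _
  have hXfin : (1 - δsk - μ) * A ^ 2
      ≤ A * (2 * Real.sqrt (1 + δsk) * ε + 2 * μ * ((Real.sqrt k)⁻¹ * ρ)) := by
    nlinarith [hlow, hdoth, hmain, hd2b, hneg]
  rcases eq_or_lt_of_le hA0 with hAz | hApos
  · rw [← hAz]
    have h1 : 0 ≤ (2 * Real.sqrt (1 + δsk) / (1 - δsk - μ)) * ε :=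
      mul_nonneg (div_nonneg (by positivity) hc.le) hε
    have h2 : 0 ≤ (2 * μ / (1 - δsk - μ)) * ((Real.sqrt k)⁻¹ * ρ) :=
      mul_nonneg (div_nonneg (by positivity) hc.le) (mul_nonneg (by positivity) hρ0)
    linarith
  · have hdiv : (1 - δsk - μ) * A ≤ 2 * Real.sqrt (1 + δsk) * ε + 2 * μ * ((Real.sqrt k)⁻¹ * ρ) := by
      nlinarith [hXfin, hApos]
    have hgoal : (2 * Real.sqrt (1 + δsk) / (1 - δsk - μ)) * ε
        + (2 * μ / (1 - δsk - μ)) * ((Real.sqrt k)⁻¹ * ρ)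
        = (2 * Real.sqrt (1 + δsk) * ε + 2 * μ * ((Real.sqrt k)⁻¹ * ρ)) / (1 - δsk - μ) := by
      field_simp
    rw [hgoal, le_div_iff₀ hc]
    nlinarith [hdiv]
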